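/- Let H be a finite group, 𝒵 its set of cyclic subgroups, and f(Z) = ∑_{W ∈ 𝒵, Z ≤ W} μ(|W:Z|). Then in the group algebra ℂ[H] (or ℤ[H]), ∑_{h ∈ H} h = ∑_{Z ∈ 𝒵} f(Z)·(∑_{z ∈ Z} z). -/

import Mathlib

open scoped Classical

/-- `f(Z) = ∑_{W cyclic, Z ≤ W} μ(|W : Z|)`, the Möbius-type weight attached to a
cyclic subgroup `Z` of the finite group `H`. -/
noncomputable def moebiusWeight {H : Type*} [Group H] [Fintype H] (Z : Subgroup H) : ℤ :=
  ∑ W ∈ Finset.univ.filter (fun W : Subgroup H => IsCyclic W ∧ Z ≤ W),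
    ArithmeticFunction.moebius (Nat.card W / Nat.card Z)

section Aux

variable {H : Type*} [Group H] [Fintype H]

/-- Membership in a subgroup of a cyclic group is detected by the order. -/
lemma mem_iff_orderOf_dvd_card {W Z : Subgroup H} (hW : IsCyclic W) (hZW : Z ≤ W)
    {x : H} (hxW : x ∈ W) : x ∈ Z ↔ orderOf x ∣ Nat.card Z := by
  haveI : IsCyclic W := hW
  constructor
  · intro hxZ
    rw [← Subgroup.orderOf_mk x hxZ]
    exact orderOf_dvd_natCard _
  · intro hdvd
    set d := Nat.card Z with hd
    have hd0 : 0 < d := Nat.card_pos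
    set F : Finset W := Finset.univ.filter (fun a : W => a ^ d = 1) with hF
    have hFle : F.card ≤ d := IsCyclic.card_pow_eq_one_le hd0
    set ZF : Finset W := Finset.univ.filter (fun a : W => a ∈ Z.subgroupOf W) with hZF
    have hcardSO : Nat.card (Z.subgroupOf W) = d :=
      Nat.card_congr (Subgroup.subgroupOfEquivOfLe hZW).toEquiv
    have hZFcard : ZF.card = d := by
      rw [← hcardSO, Nat.card_eq_fintype_card, Fintype.card_subtype]
    have hsub : ZF ⊆ F := by
      intro a ha
      rw [hZF, Finset.mem_filter] at ha
      rw [hF, Finset.mem_filter]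
      refine ⟨Finset.mem_univ _, ?_⟩
      have h1 : orderOf a ∣ d := by
        rw [← Subgroup.orderOf_mk a ha.2, ← hcardSO]
        exact orderOf_dvd_natCard _
      exact orderOf_dvd_iff_pow_eq_one.mp h1
    have hEq : ZF = F := Finset.eq_of_subset_of_card_le hsub (hFle.trans_eq hZFcard.symm)
    have hx' : (⟨x, hxW⟩ : W) ∈ F := by
      rw [hF, Finset.mem_filter]
      refine ⟨Finset.mem_univ _, ?_⟩
      rw [orderOf_dvd_iff_pow_eq_one.symm, Subgroup.orderOf_mk x hxW]
      exact hdvd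
    rw [← hEq, hZF, Finset.mem_filter] at hx'
    exact hx'.2

/-- A cyclic group has at most one subgroup of each cardinality. -/
lemma eq_of_card_eq_of_le {W Z₁ Z₂ : Subgroup H} (hW : IsCyclic W)
    (h1 : Z₁ ≤ W) (h2 : Z₂ ≤ W) (hcard : Nat.card Z₁ = Nat.card Z₂) : Z₁ = Z₂ := by
  apply le_antisymm
  · intro x hx
    rw [mem_iff_orderOf_dvd_card hW h2 (h1 hx), ← hcard,
      ← mem_iff_orderOf_dvd_card hW h1 (h1 hx)]
    exact hx
  · intro x hx
    rw [mem_iff_orderOf_dvd_card hW h1 (h2 hx), hcard,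
      ← mem_iff_orderOf_dvd_card hW h2 (h2 hx)]
    exact hx

lemma sum_moebius_divisors (m : ℕ) :
    (∑ e ∈ m.divisors, ArithmeticFunction.moebius e) = if m = 1 then 1 else 0 := by
  rw [← ArithmeticFunction.coe_mul_zeta_apply, ArithmeticFunction.moebius_mul_coe_zeta,
    ArithmeticFunction.one_apply]

/-- Key counting lemma: the Möbius sum over subgroups between `zpowers h` and a
cyclic subgroup `W` detects `W = zpowers h`. -/
lemma inner_moebius_sum {W : Subgroup H} (hW : IsCyclic W) {h : H} (hhW : h ∈ W) :
    (∑ Z ∈ Finset.univ.filter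
        (fun Z : Subgroup H => Subgroup.zpowers h ≤ Z ∧ Z ≤ W),
      (ArithmeticFunction.moebius (Nat.card W / Nat.card Z) : ℤ)) =
    (if Subgroup.zpowers h = W then 1 else 0) := by
  haveI : IsCyclic W := hW
  set n := Nat.card W with hn
  have hn0 : 0 < n := Nat.card_pos
  have hordh : orderOf h ∣ n := by
    rw [← Nat.card_zpowers h]
    exact Subgroup.card_dvd_of_le ((Subgroup.zpowers_le).mpr hhW)
  have hordh0 : 0 < orderOf h := orderOf_pos h
  set m := n / orderOf h with hm
  have hmn : orderOf h * m = n := Nat.mul_div_cancel' hordh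
  have hm0 : 0 < m := Nat.div_pos (Nat.le_of_dvd hn0 hordh) hordh0
  -- a generator of W
  obtain ⟨g, hg⟩ := IsCyclic.exists_ofOrder_eq_natCard (α := W)
  set w : H := (g : H) with hw
  have hword : orderOf w = n := by
    rw [hw, Subgroup.orderOf_coe, hg]
  have hWw : Subgroup.zpowers w = W := by
    refine Subgroup.eq_of_le_of_card_ge ((Subgroup.zpowers_le).mpr g.2) ?_
    rw [Nat.card_zpowers, hword]
  -- cardinality of `zpowers (w ^ e)` for `e ∣ n`
  have hcard_pow : ∀ e : ℕ, e ∣ n → Nat.card (Subgroup.zpowers (w ^ e)) = n / e := by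
    intro e he
    rw [Nat.card_zpowers, orderOf_pow, hword, Nat.gcd_eq_right he]
  have hiff : (Subgroup.zpowers h = W) ↔ m = 1 := by
    constructor
    · intro hEq
      have hoh : orderOf h = n := by rw [← Nat.card_zpowers h, hEq]
      have h2 : orderOf h * m = orderOf h * 1 := by rw [hmn, mul_one, hoh]
      exact Nat.eq_of_mul_eq_mul_left hordh0 h2
    · intro hmeq
      rw [hmeq, mul_one] at hmn
      have hcard : Nat.card (Subgroup.zpowers h) = n := by rw [Nat.card_zpowers, hmn]
      exact Subgroup.eq_of_le_of_card_ge ((Subgroup.zpowers_le).mpr hhW)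
        (le_of_eq hcard.symm)
  simp only [hiff]
  rw [← sum_moebius_divisors m]
  refine Finset.sum_nbij' (fun Z => n / Nat.card Z)
    (fun e => Subgroup.zpowers (w ^ e)) ?_ ?_ ?_ ?_ ?_
  · -- i maps into divisors
    intro Z hZ
    rw [Finset.mem_filter] at hZ
    obtain ⟨-, hhZ, hZW⟩ := hZ
    have h1 : orderOf h ∣ Nat.card Z := by
      rw [← Nat.card_zpowers h]; exact Subgroup.card_dvd_of_le hhZ
    have h2 : Nat.card Z ∣ n := Subgroup.card_dvd_of_le hZW
    obtain ⟨s, hs⟩ := h1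
    obtain ⟨t, ht⟩ := h2
    have hZ0 : 0 < Nat.card Z := Nat.card_pos
    rw [Nat.mem_divisors]
    refine ⟨⟨s, ?_⟩, by omega⟩
    have : n / Nat.card Z = t := by rw [ht]; exact Nat.mul_div_cancel_left _ hZ0
    rw [this]
    have : n = orderOf h * (s * t) := by rw [ht, hs]; ring
    rw [hm, this, Nat.mul_div_cancel_left _ hordh0]
    ring
  · -- j maps into the filter
    intro e he
    have he0 : 0 < e := Nat.pos_of_mem_divisors he
    rw [Nat.mem_divisors] at he
    obtain ⟨⟨u, hu⟩, -⟩ := he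
    have hen : e ∣ n := by
      refine ⟨orderOf h * u, ?_⟩
      rw [← hmn, hu]; ring
    rw [Finset.mem_filter]
    refine ⟨Finset.mem_univ _, ?_, (Subgroup.zpowers_le).mpr (W.pow_mem g.2 e)⟩
    rw [Subgroup.zpowers_le]
    rw [mem_iff_orderOf_dvd_card hW ((Subgroup.zpowers_le).mpr (W.pow_mem g.2 e)) hhW]
    rw [hcard_pow e hen]
    refine ⟨u, ?_⟩
    have : n = e * (orderOf h * u) := by rw [← hmn, hu]; ring
    rw [this, Nat.mul_div_cancel_left _ he0]
  · -- left inverse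
    intro Z hZ
    rw [Finset.mem_filter] at hZ
    obtain ⟨-, hhZ, hZW⟩ := hZ
    have h2 : Nat.card Z ∣ n := Subgroup.card_dvd_of_le hZW
    have hZ0 : 0 < Nat.card Z := Nat.card_pos
    have hidvd : n / Nat.card Z ∣ n := Nat.div_dvd_of_dvd h2
    refine eq_of_card_eq_of_le hW ((Subgroup.zpowers_le).mpr (W.pow_mem g.2 _)) hZW ?_
    rw [hcard_pow _ hidvd, Nat.div_div_self h2 (by omega)]
  · -- right inverse
    intro e he
    have he0 : 0 < e := Nat.pos_of_mem_divisors he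
    rw [Nat.mem_divisors] at he
    obtain ⟨⟨u, hu⟩, -⟩ := he
    have hen : e ∣ n := by
      refine ⟨orderOf h * u, ?_⟩
      rw [← hmn, hu]; ring
    rw [hcard_pow e hen, Nat.div_div_self hen (by omega)]
  · intro Z _; rfl

end Aux

/-- In the group algebra `ℤ[H]`: `H⁺ = ∑_{Z cyclic ≤ H} f(Z)·Z⁺`, where
`S⁺ = ∑_{s ∈ S} s`. -/
theorem sum_univ_eq_sum_cyclic (H : Type) [Group H] [Fintype H] :
    ∑ h : H, MonoidAlgebra.of ℤ H h =
    ∑ Z ∈ Finset.univ.filter (fun Z : Subgroup H => IsCyclic Z),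
      moebiusWeight Z • ∑ z : Z, MonoidAlgebra.of ℤ H (z : H) := by
  ext x
  -- evaluate coefficients at `x`
  rw [MonoidAlgebra.coeff_sum, MonoidAlgebra.coeff_sum, Finsupp.finset_sum_apply, Finsupp.finset_sum_apply]
  -- LHS is 1
  have hL : (∑ h : H, (MonoidAlgebra.of ℤ H h).coeff x) = 1 := by
    simp only [MonoidAlgebra.of_apply, MonoidAlgebra.single_apply]
    rw [Finset.sum_ite_eq' Finset.univ x (fun _ => (1:ℤ))]
    simp
  rw [hL]
  -- indicator computation for each subgroup
  have hInd : ∀ Z : Subgroup H, (∑ z : Z, (MonoidAlgebra.of ℤ H (z:H)).coeff x)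
      = if x ∈ Z then 1 else 0 := by
    intro Z
    simp only [MonoidAlgebra.of_apply, MonoidAlgebra.single_apply]
    by_cases hx : x ∈ Z
    · rw [if_pos hx]
      have hz : ∀ z : Z, (if (z:H) = x then (1:ℤ) else 0)
          = if z = (⟨x, hx⟩ : Z) then 1 else 0 := by
        intro z
        congr 1
        simp [eq_iff_iff, Subtype.ext_iff]
      rw [Finset.sum_congr rfl (fun z _ => hz z),
        Finset.sum_ite_eq' Finset.univ (⟨x, hx⟩ : Z) (fun _ => (1:ℤ))]
      simp
    · rw [if_neg hx]
      apply Finset.sum_eq_zero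
      intro z _
      rw [if_neg]
      intro hz
      exact hx (hz ▸ z.2)
  have hRW : ∀ Z : Subgroup H,
      ((moebiusWeight Z • ∑ z : Z, MonoidAlgebra.of ℤ H (z : H)).coeff x)
      = moebiusWeight Z * (if x ∈ Z then 1 else 0) := by
    intro Z
    rw [MonoidAlgebra.coeff_smul, Finsupp.smul_apply, ← hInd Z, MonoidAlgebra.coeff_sum, Finsupp.finset_sum_apply]
    simp
  rw [Finset.sum_congr rfl (fun Z _ => hRW Z)]
  -- now a purely combinatorial identity
  simp only [mul_ite, mul_one, mul_zero]
  rw [← Finset.sum_filter, Finset.filter_filter]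
  unfold moebiusWeight
  -- swap sums
  rw [Finset.sum_filter]
  have hsplit : ∀ Z : Subgroup H,
      (if IsCyclic Z ∧ x ∈ Z then
        ∑ W ∈ Finset.univ.filter (fun W : Subgroup H => IsCyclic W ∧ Z ≤ W),
          (ArithmeticFunction.moebius (Nat.card W / Nat.card Z) : ℤ) else 0)
      = ∑ W : Subgroup H, (if (IsCyclic W) ∧ ((IsCyclic Z ∧ x ∈ Z) ∧ Z ≤ W) then
          (ArithmeticFunction.moebius (Nat.card W / Nat.card Z) : ℤ) else 0) := by
    intro Z
    by_cases hZ : IsCyclic Z ∧ x ∈ Z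
    · rw [if_pos hZ, Finset.sum_filter]
      apply Finset.sum_congr rfl
      intro W _
      by_cases hW : IsCyclic W ∧ Z ≤ W
      · rw [if_pos hW, if_pos ⟨hW.1, hZ, hW.2⟩]
      · rw [if_neg hW, if_neg (fun hc => hW ⟨hc.1, hc.2.2⟩)]
    · rw [if_neg hZ]
      symm
      apply Finset.sum_eq_zero
      intro W _
      rw [if_neg (fun hc => hZ hc.2.1)]
  rw [Finset.sum_congr rfl (fun Z _ => hsplit Z), Finset.sum_comm]
  have hinner : ∀ W : Subgroup H,
      (∑ Z : Subgroup H, (if (IsCyclic W) ∧ ((IsCyclic Z ∧ x ∈ Z) ∧ Z ≤ W) then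
          (ArithmeticFunction.moebius (Nat.card W / Nat.card Z) : ℤ) else 0))
      = if IsCyclic W ∧ Subgroup.zpowers x = W then 1 else 0 := by
    intro W
    by_cases hW : IsCyclic W
    · by_cases hxW : x ∈ W
      · have hthis := inner_moebius_sum hW hxW
        rw [Finset.sum_filter] at hthis
        rw [show (if IsCyclic W ∧ Subgroup.zpowers x = W then (1:ℤ) else 0)
            = if Subgroup.zpowers x = W then 1 else 0 by
          simp [hW]]
        rw [← hthis]
        apply Finset.sum_congr rfl
        intro Z _
        congr 1
        simp only [eq_iff_iff]
        constructor
        · rintro ⟨-, ⟨-, hxZ⟩, hZW⟩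
          exact ⟨(Subgroup.zpowers_le).mpr hxZ, hZW⟩
        · rintro ⟨hxZ, hZW⟩
          exact ⟨hW, ⟨Subgroup.isCyclic_of_le hZW (H' := W), hxZ (Subgroup.mem_zpowers x)⟩, hZW⟩
      · rw [if_neg (fun (hc : IsCyclic W ∧ Subgroup.zpowers x = W) =>
            hxW (hc.2 ▸ Subgroup.mem_zpowers x))]
        apply Finset.sum_eq_zero
        intro Z _
        rw [if_neg]
        rintro ⟨-, ⟨-, hxZ⟩, hZW⟩
        exact hxW (hZW hxZ)
    · rw [if_neg (fun hc => hW hc.1)]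
      apply Finset.sum_eq_zero
      intro Z _
      rw [if_neg (fun hc => hW hc.1)]
  rw [Finset.sum_congr rfl (fun W _ => hinner W)]
  have hcycx : IsCyclic (Subgroup.zpowers x) := by
    refine ⟨⟨⟨x, Subgroup.mem_zpowers x⟩, fun y => ?_⟩⟩
    obtain ⟨k, hk⟩ := Subgroup.mem_zpowers_iff.mp y.2
    exact ⟨k, Subtype.ext (by simpa using hk)⟩
  have hcond : ∀ W : Subgroup H, (IsCyclic W ∧ Subgroup.zpowers x = W) ↔
      (W = Subgroup.zpowers x) :=
    fun W => ⟨fun hc => hc.2.symm, fun hc => ⟨hc ▸ hcycx, hc.symm⟩⟩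
  simp only [hcond]
  simp [Finset.sum_ite_eq']
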